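/- Fix a real number β_p and a function f on disorder configurations. Then as γ → ∞, the average of f under the correlated-disorder distribution converges to its average over Mattis (unfrustrated) configurations weighted by the pure Ising measure: lim_{γ→∞} (1/(2·cosh γ)^{N_B}) · Σ_τ Z_τ(γ) · (exp(β_p·Σ_{e∈E} τ(e)) / Z_τ(β_p)) · f(τ) = (Σ_ξ exp(β_p·Σ_{e∈E} ξ(i(e))·ξ(j(e))) · f(τ_ξ)) / (Σ_ξ exp(β_p·Σ_{e∈E} ξ(i(e))·ξ(j(e)))), where ξ ranges over all spin configurations and τ_ξ is the Mattis disorder configuration τ_ξ(e) = ξ(i(e))·ξ(j(e)). -/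

import Mathlib

open Finset Filter

/-- Ising energy H_t(S), spins valued in the units of the integers, i.e. {-1, 1}. -/
noncomputable def isingH {V E : Type*} [Fintype E] (i j : E → V)
    (τ : E → ℤˣ) (S : V → ℤˣ) : ℝ :=
  ∑ e, ((τ e : ℤ) : ℝ) * ((S (i e) : ℤ) : ℝ) * ((S (j e) : ℤ) : ℝ)

/-- Partition function Z_t(b). -/
noncomputable def isingZ {V E : Type*} [Fintype V] [DecidableEq V] [Fintype E]
    (i j : E → V) (β : ℝ) (τ : E → ℤˣ) : ℝ :=
  ∑ S : V → ℤˣ, Real.exp (β * isingH i j τ S)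

lemma exp_neg_two_lim : Tendsto (fun γ : ℝ => Real.exp (-(2 * γ))) atTop (nhds 0) :=
  Real.tendsto_exp_neg_atTop_nhds_zero.comp (tendsto_id.const_mul_atTop (by norm_num))

lemma lim_pos : Tendsto (fun γ : ℝ => Real.exp γ / (2 * Real.cosh γ)) atTop (nhds 1) := by
  have heq : (fun γ : ℝ => Real.exp γ / (2 * Real.cosh γ))
      = fun γ : ℝ => 1 / (1 + Real.exp (-(2 * γ))) := by
    funext γ
    rw [Real.cosh_eq]
    have h1 : Real.exp γ > 0 := Real.exp_pos γ
    have h2 : Real.exp (-γ) > 0 := Real.exp_pos _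
    have h3 : Real.exp (-(2*γ)) = Real.exp (-γ) / Real.exp γ := by
      rw [← Real.exp_sub]; ring_nf
    rw [h3]
    field_simp
  rw [heq]
  have h := (tendsto_const_nhds.add exp_neg_two_lim :
    Tendsto (fun γ : ℝ => 1 + Real.exp (-(2*γ))) atTop (nhds (1 + 0)))
  simp only [one_div]
  simpa using h.inv₀ (by norm_num)

lemma lim_neg : Tendsto (fun γ : ℝ => Real.exp (-γ) / (2 * Real.cosh γ)) atTop (nhds 0) := by
  have heq : (fun γ : ℝ => Real.exp (-γ) / (2 * Real.cosh γ))
      = fun γ : ℝ => Real.exp (-(2 * γ)) / (1 + Real.exp (-(2 * γ))) := by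
    funext γ
    rw [Real.cosh_eq]
    have h1 : Real.exp γ > 0 := Real.exp_pos γ
    have h3 : Real.exp (-(2*γ)) = Real.exp (-γ) / Real.exp γ := by
      rw [← Real.exp_sub]; ring_nf
    rw [h3]
    field_simp
  rw [heq]
  have h := (tendsto_const_nhds.add exp_neg_two_lim :
    Tendsto (fun γ : ℝ => 1 + Real.exp (-(2*γ))) atTop (nhds (1 + 0)))
  simpa [Pi.div_def] using exp_neg_two_lim.div h (by norm_num)

lemma lim_unit (u : ℤˣ) :
    Tendsto (fun γ : ℝ => Real.exp (γ * ((u : ℤ) : ℝ)) / (2 * Real.cosh γ)) atTop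
      (nhds (if u = 1 then 1 else 0)) := by
  rcases Int.units_eq_one_or u with h | h <;> subst h
  · simpa using lim_pos
  · have : ((-1 : ℤˣ) : ℤ) = -1 := rfl
    simp only [this, if_neg (by decide : ¬((-1 : ℤˣ) = 1))]
    simpa [mul_neg, mul_one, mul_comm] using lim_neg

lemma lim_prod {E : Type*} [Fintype E] (t : E → ℤˣ) :
    Tendsto (fun γ : ℝ => Real.exp (γ * ∑ e, ((t e : ℤ) : ℝ)) / (2 * Real.cosh γ) ^ (Fintype.card E))
      atTop (nhds (if ∀ e, t e = 1 then 1 else 0)) := by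
  have heq : (fun γ : ℝ => Real.exp (γ * ∑ e, ((t e : ℤ) : ℝ)) / (2 * Real.cosh γ) ^ (Fintype.card E))
      = fun γ : ℝ => ∏ e, Real.exp (γ * ((t e : ℤ) : ℝ)) / (2 * Real.cosh γ) := by
    funext γ
    rw [Finset.prod_div_distrib, Finset.prod_const, Finset.card_univ, ← Real.exp_sum, ← Finset.mul_sum]
  rw [heq]
  have hval : (if ∀ e, t e = 1 then (1:ℝ) else 0) = ∏ e, (if t e = 1 then (1:ℝ) else 0) := by
    rw [Finset.prod_boole]
    simp
  rw [hval]
  exact tendsto_finset_prod _ (fun e _ => lim_unit (t e))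

lemma units_mul_eq_one_iff (a b : ℤˣ) : a * b = 1 ↔ a = b := by
  constructor
  · intro h
    rw [eq_inv_of_mul_eq_one_left h, Int.units_inv_eq_self]
  · rintro rfl
    exact Int.units_mul_self _

theorem stmt_15 {V E : Type*} [Fintype V] [DecidableEq V] [Fintype E] [DecidableEq E]
    (i j : E → V) (hij : ∀ e, i e ≠ j e)
    (βp : ℝ) (f : (E → ℤˣ) → ℝ) :
    Filter.Tendsto
      (fun γ : ℝ =>
        (1 / (2 * Real.cosh γ) ^ (Fintype.card E)) *
          ∑ τ : E → ℤˣ,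
            isingZ i j γ τ * (Real.exp (βp * ∑ e, ((τ e : ℤ) : ℝ)) / isingZ i j βp τ) *
              f τ)
      Filter.atTop
      (nhds
        ((∑ ξ : V → ℤˣ,
            Real.exp (βp * ∑ e, ((ξ (i e) : ℤ) : ℝ) * ((ξ (j e) : ℤ) : ℝ)) *
              f (fun e => ξ (i e) * ξ (j e))) /
          (∑ ξ : V → ℤˣ,
            Real.exp (βp * ∑ e, ((ξ (i e) : ℤ) : ℝ) * ((ξ (j e) : ℤ) : ℝ))))) := by
  classical
  set c : (E → ℤˣ) → ℝ := fun τ =>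
    Real.exp (βp * ∑ e, ((τ e : ℤ) : ℝ)) / isingZ i j βp τ * f τ with hc
  -- rewrite the function as a double sum
  have hfun : ∀ γ : ℝ,
      (1 / (2 * Real.cosh γ) ^ (Fintype.card E)) *
          ∑ τ : E → ℤˣ,
            isingZ i j γ τ * (Real.exp (βp * ∑ e, ((τ e : ℤ) : ℝ)) / isingZ i j βp τ) * f τ
        = ∑ τ : E → ℤˣ, ∑ S : V → ℤˣ,
            (Real.exp (γ * ∑ e, (((τ e * S (i e) * S (j e) : ℤˣ) : ℤ) : ℝ))
              / (2 * Real.cosh γ) ^ (Fintype.card E)) * c τ := by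
    intro γ
    rw [Finset.mul_sum]
    refine Finset.sum_congr rfl fun τ _ => ?_
    rw [isingZ, Finset.sum_mul, Finset.sum_mul, Finset.mul_sum]
    refine Finset.sum_congr rfl fun S _ => ?_
    have hH : isingH i j τ S = ∑ e, (((τ e * S (i e) * S (j e) : ℤˣ) : ℤ) : ℝ) := by
      unfold isingH
      refine Finset.sum_congr rfl fun e _ => ?_
      push_cast
      ring
    rw [hH, hc]
    ring
  -- the limit of the double sum
  have hlim : Tendsto
      (fun γ : ℝ => ∑ τ : E → ℤˣ, ∑ S : V → ℤˣ,
            (Real.exp (γ * ∑ e, (((τ e * S (i e) * S (j e) : ℤˣ) : ℤ) : ℝ))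
              / (2 * Real.cosh γ) ^ (Fintype.card E)) * c τ)
      atTop
      (nhds (∑ τ : E → ℤˣ, ∑ S : V → ℤˣ,
        (if ∀ e, τ e * S (i e) * S (j e) = 1 then (1:ℝ) else 0) * c τ)) := by
    refine tendsto_finset_sum _ fun τ _ => tendsto_finset_sum _ fun S _ => ?_
    exact (lim_prod (fun e => τ e * S (i e) * S (j e))).mul_const (c τ)
  -- identify the limit value
  have hval : (∑ τ : E → ℤˣ, ∑ S : V → ℤˣ,
        (if ∀ e, τ e * S (i e) * S (j e) = 1 then (1:ℝ) else 0) * c τ)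
      = (∑ ξ : V → ℤˣ,
            Real.exp (βp * ∑ e, ((ξ (i e) : ℤ) : ℝ) * ((ξ (j e) : ℤ) : ℝ)) *
              f (fun e => ξ (i e) * ξ (j e))) /
          (∑ ξ : V → ℤˣ,
            Real.exp (βp * ∑ e, ((ξ (i e) : ℤ) : ℝ) * ((ξ (j e) : ℤ) : ℝ))) := by
    rw [Finset.sum_comm]
    -- gauge invariance
    have hZ : ∀ S : V → ℤˣ, isingZ i j βp (fun e => S (i e) * S (j e))
        = ∑ ξ : V → ℤˣ, Real.exp (βp * ∑ e, ((ξ (i e) : ℤ) : ℝ) * ((ξ (j e) : ℤ) : ℝ)) := by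
      intro S
      unfold isingZ
      refine Fintype.sum_equiv (Equiv.mulLeft S) _ _ fun S' => ?_
      congr 1
      unfold isingH
      congr 1
      refine Finset.sum_congr rfl fun e _ => ?_
      simp only [Equiv.coe_mulLeft, Pi.mul_apply]
      push_cast
      ring
    have hcond : ∀ (S : V → ℤˣ) (τ : E → ℤˣ),
        (∀ e, τ e * S (i e) * S (j e) = 1) ↔ τ = fun e => S (i e) * S (j e) := by
      intro S τ
      rw [funext_iff]
      refine forall_congr' fun e => ?_
      rw [mul_assoc, units_mul_eq_one_iff]
    have hsum : ∀ S : V → ℤˣ, (∑ τ : E → ℤˣ,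
        (if ∀ e, τ e * S (i e) * S (j e) = 1 then (1:ℝ) else 0) * c τ)
        = c (fun e => S (i e) * S (j e)) := by
      intro S
      simp only [hcond S, ite_mul, one_mul, zero_mul]
      exact Finset.sum_ite_eq' _ _ _ |>.trans (if_pos (Finset.mem_univ _))
    rw [Finset.sum_congr rfl fun S _ => hsum S]
    rw [Finset.sum_div]
    refine Finset.sum_congr rfl fun S _ => ?_
    rw [hc]
    simp only
    rw [hZ S]
    have : (∑ e, (((S (i e) * S (j e) : ℤˣ) : ℤ) : ℝ))
        = ∑ e, ((S (i e) : ℤ) : ℝ) * ((S (j e) : ℤ) : ℝ) := by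
      refine Finset.sum_congr rfl fun e _ => ?_
      push_cast; ring
    rw [this, div_mul_eq_mul_div]
  rw [← hval]
  exact hlim.congr fun γ => (hfun γ).symm
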